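/- Fix an integer g ≥ 3. Suppose G₀ is a d-regular graph on n₀ vertices with girth at least g admitting a proper (d+1)-colouring σ₀ in which every vertex is frozen (i.e., every proper (d+1)-colouring in the same cluster of the distance-1 colouring graph agrees with σ₀ everywhere). Let G be the disjoint union of n/n₀ copies of G₀ and 𝛔 a uniformly random proper (d+1)-colouring of G. Then with high probability as n → ∞, the number of vertices of G that are frozen in 𝛔 is at least n/(2·n₀·(d+1)^{n₀}) · n₀ = Θ(n). -/

import Mathlib

/-- Two proper `k`-colourings of `G` are adjacent in the (distance-1) colouring graph
if both are proper and they differ on at most one vertex. -/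
def ColAdj {V : Type} (G : SimpleGraph V) {k : ℕ} (τ σ : V → Fin k) : Prop :=
  (∀ u w : V, G.Adj u w → τ u ≠ τ w) ∧ (∀ u w : V, G.Adj u w → σ u ≠ σ w) ∧
    Set.ncard {u : V | τ u ≠ σ u} ≤ 1

/-- A vertex `v` is frozen in the proper colouring `τ` if every colouring in the
same cluster (connected component of the colouring graph) agrees with `τ` at `v`. -/
def IsFrozen {V : Type} (G : SimpleGraph V) {k : ℕ} (τ : V → Fin k) (v : V) : Prop :=
  ∀ σ : V → Fin k, Relation.ReflTransGen (ColAdj G) τ σ → σ v = τ v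

/-- The disjoint union of `m` copies of `G₀`. -/
def copies {V₀ : Type} (G₀ : SimpleGraph V₀) (m : ℕ) : SimpleGraph (Fin m × V₀) where
  Adj a b := a.1 = b.1 ∧ G₀.Adj a.2 b.2
  symm := by constructor; intro a b h; exact ⟨h.1.symm, h.2.symm⟩
  loopless := by constructor; intro a h; exact G₀.irrefl h.2


section frozen
variable {V₀ : Type} [Finite V₀] {G₀ : SimpleGraph V₀} {k m : ℕ}

lemma colAdj_restrict (i : Fin m) {τ σ : Fin m × V₀ → Fin k}
    (h : ColAdj (copies G₀ m) τ σ) :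
    ColAdj G₀ (fun u => τ (i, u)) (fun u => σ (i, u)) := by
  obtain ⟨h1, h2, h3⟩ := h
  refine ⟨fun u w huw => h1 _ _ ⟨rfl, huw⟩, fun u w huw => h2 _ _ ⟨rfl, huw⟩, ?_⟩
  refine le_trans (Set.ncard_le_ncard_of_injOn (fun u => (i, u)) ?_ ?_ (Set.toFinite _)) h3
  · intro u hu; exact hu
  · intro u _ w _ h; exact (Prod.mk.injEq .. ▸ h).2

lemma frozen_of_copy_eq {σ₀ : V₀ → Fin k} (hfrozen : ∀ v : V₀, IsFrozen G₀ σ₀ v)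
    (σ : Fin m × V₀ → Fin k) (i : Fin m) (h : ∀ u, σ (i, u) = σ₀ u) (v : V₀) :
    IsFrozen (copies G₀ m) σ (i, v) := by
  intro τ hreach
  have hproj : Relation.ReflTransGen (ColAdj G₀) (fun u => σ (i, u)) (fun u => τ (i, u)) :=
    Relation.ReflTransGen.lift (fun (f : Fin m × V₀ → Fin k) (u : V₀) => f (i, u))
      (fun _ _ hr => colAdj_restrict i hr) _ _ hreach
  have hs : (fun u => σ (i, u)) = σ₀ := funext h
  rw [hs] at hproj
  have := hfrozen v _ hproj
  rw [this, h v]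

end frozen

open Finset

section count
variable {α : Type*} [DecidableEq α] [Fintype α]

lemma prod_if_mem {m : ℕ} (s : Finset (Fin m)) (b : ℕ) :
    (∏ j : Fin m, if j ∈ s then 1 else b) = b ^ (m - s.card) := by
  rw [Finset.prod_ite, Finset.prod_const_one, Finset.prod_const, one_mul]
  congr 1
  have : Finset.univ.filter (fun j => ¬ j ∈ s) = sᶜ := by ext j; simp
  rw [this, Finset.card_compl, Fintype.card_fin]

lemma filter_slice_eq {S : Finset α} {σ₀ : α} (hS : σ₀ ∈ S) {m : ℕ} (s : Finset (Fin m)) :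
    ((Fintype.piFinset fun _ : Fin m => S).filter fun f => ∀ j ∈ s, f j = σ₀).card =
      S.card ^ (m - s.card) := by
  have h : ((Fintype.piFinset fun _ : Fin m => S).filter fun f => ∀ j ∈ s, f j = σ₀) =
      Fintype.piFinset (fun j : Fin m => if j ∈ s then {σ₀} else S) := by
    ext f
    simp only [mem_filter, Fintype.mem_piFinset]
    constructor
    · rintro ⟨hf, hfi⟩ j
      by_cases hj : j ∈ s <;> simp [hj, hfi j, hf j]
    · intro hf
      refine ⟨fun j => ?_, fun j hj => ?_⟩
      · have := hf j; by_cases hjs : j ∈ s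
        · simp [hjs] at this; simp [this, hS]
        · simpa [hjs] using this
      · have := hf j; simpa [hj] using this
  rw [h, Fintype.card_piFinset, ← prod_if_mem s S.card]
  exact Finset.prod_congr rfl (fun j _ => by by_cases hj : j ∈ s <;> simp [hj])

end count

section sums
variable {α : Type*} [DecidableEq α] [Fintype α] {S : Finset α} {σ₀ : α}

lemma filter_single (hS : σ₀ ∈ S) {m : ℕ} (i : Fin m) :
    ((Fintype.piFinset fun _ : Fin m => S).filter fun f => f i = σ₀).card =
      S.card ^ (m - 1) := by
  have := filter_slice_eq hS ({i} : Finset (Fin m))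
  simp only [Finset.mem_singleton, Finset.card_singleton] at this
  rw [← this]
  congr 1
  ext f
  simp

lemma filter_pair (hS : σ₀ ∈ S) {m : ℕ} (i j : Fin m) (hij : i ≠ j) :
    ((Fintype.piFinset fun _ : Fin m => S).filter fun f => f i = σ₀ ∧ f j = σ₀).card =
      S.card ^ (m - 2) := by
  have := filter_slice_eq hS ({i, j} : Finset (Fin m))
  rw [Finset.card_insert_of_notMem (by simp [hij]), Finset.card_singleton] at this
  rw [← this]
  congr 1
  ext f
  simp only [Finset.mem_filter, Finset.mem_insert, Finset.mem_singleton]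
  constructor
  · rintro ⟨h1, h2, h3⟩; exact ⟨h1, fun l hl => by rcases hl with rfl | rfl <;> assumption⟩
  · rintro ⟨h1, h2⟩; exact ⟨h1, h2 i (Or.inl rfl), h2 j (Or.inr rfl)⟩

lemma sum_X (hS : σ₀ ∈ S) (m : ℕ) :
    ∑ f ∈ Fintype.piFinset (fun _ : Fin m => S),
        (Finset.univ.filter fun i => f i = σ₀).card = m * S.card ^ (m - 1) := by
  have h : ∀ f : Fin m → α, (Finset.univ.filter fun i => f i = σ₀).card =
      ∑ i : Fin m, if f i = σ₀ then 1 else 0 := fun f => Finset.card_filter _ _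
  simp only [h]
  rw [Finset.sum_comm]
  have : ∀ i : Fin m, ∑ f ∈ Fintype.piFinset (fun _ : Fin m => S),
      (if f i = σ₀ then 1 else 0) = S.card ^ (m - 1) := by
    intro i
    rw [← Finset.card_filter, filter_single hS]
  simp [this, Finset.sum_const]

lemma sum_XX (hS : σ₀ ∈ S) (m : ℕ) :
    ∑ f ∈ Fintype.piFinset (fun _ : Fin m => S),
        (Finset.univ.filter fun i => f i = σ₀).card *
          (Finset.univ.filter fun i => f i = σ₀).card =
      m * S.card ^ (m - 1) + (m * m - m) * S.card ^ (m - 2) := by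
  have h : ∀ f : Fin m → α, (Finset.univ.filter fun i => f i = σ₀).card *
      (Finset.univ.filter fun i => f i = σ₀).card =
      ∑ p ∈ Finset.univ ×ˢ (Finset.univ : Finset (Fin m)),
        if f p.1 = σ₀ ∧ f p.2 = σ₀ then 1 else 0 := by
    intro f
    rw [Finset.card_filter, Finset.sum_mul_sum, ← Finset.sum_product']
    refine Finset.sum_congr rfl fun p _ => ?_
    by_cases h1 : f p.1 = σ₀ <;> by_cases h2 : f p.2 = σ₀ <;> simp [h1, h2]
  simp only [h]
  rw [Finset.sum_comm]
  have key : ∀ p : Fin m × Fin m, ∑ f ∈ Fintype.piFinset (fun _ : Fin m => S),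
      (if f p.1 = σ₀ ∧ f p.2 = σ₀ then 1 else 0) =
      if p.1 = p.2 then S.card ^ (m - 1) else S.card ^ (m - 2) := by
    rintro ⟨i, j⟩
    rw [← Finset.card_filter]
    by_cases hij : i = j
    · subst hij
      simp only [if_pos rfl, and_self]
      exact filter_single hS i
    · rw [if_neg hij]
      exact filter_pair hS i j hij
  rw [Finset.sum_congr rfl (fun p _ => key p)]
  rw [Finset.sum_ite]
  rw [Finset.sum_const, Finset.sum_const]
  have h1 : ((Finset.univ ×ˢ (Finset.univ : Finset (Fin m))).filter
      fun p => p.1 = p.2).card = m := by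
    have : ((Finset.univ ×ˢ (Finset.univ : Finset (Fin m))).filter
        fun p => p.1 = p.2) = (Finset.univ : Finset (Fin m)).diag := by
      ext p; simp [Finset.mem_diag]
    rw [this, Finset.diag_card, Finset.card_univ, Fintype.card_fin]
  have h2 : ((Finset.univ ×ˢ (Finset.univ : Finset (Fin m))).filter
      fun p => ¬ p.1 = p.2).card = m * m - m := by
    have := Finset.card_filter_add_card_filter_not
      (s := Finset.univ ×ˢ (Finset.univ : Finset (Fin m))) (p := fun p => p.1 = p.2)
    simp only [Finset.card_product, Finset.card_univ, Fintype.card_fin] at this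
    omega
  rw [h1, h2]
  simp [smul_eq_mul]

end sums

section cheb
variable {α : Type*} [DecidableEq α] [Fintype α] {S : Finset α} {σ₀ : α}

lemma cheb_sum (hS : σ₀ ∈ S) (m' : ℕ) :
    ∑ f ∈ Fintype.piFinset (fun _ : Fin (m' + 2) => S),
        ((S.card : ℝ) * ((Finset.univ.filter fun i => f i = σ₀).card : ℝ) - ((m' + 2 : ℕ) : ℝ)) ^ 2 ≤
      ((m' + 2 : ℕ) : ℝ) * (S.card : ℝ) ^ (m' + 3) := by
  set m := m' + 2 with hm
  set N := (S.card : ℝ) with hNdef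
  have hN0 : (0 : ℝ) ≤ N := by positivity
  have e1 : ∀ f : Fin m → α, (N * ((Finset.univ.filter fun i => f i = σ₀).card : ℝ) - m) ^ 2 =
      N ^ 2 * (((Finset.univ.filter fun i => f i = σ₀).card *
        (Finset.univ.filter fun i => f i = σ₀).card : ℕ) : ℝ)
      - 2 * N * m * (((Finset.univ.filter fun i => f i = σ₀).card : ℕ) : ℝ) + m ^ 2 := by
    intro f; push_cast; ring
  rw [Finset.sum_congr rfl (fun f _ => e1 f)]
  rw [Finset.sum_add_distrib, Finset.sum_sub_distrib, ← Finset.mul_sum, ← Finset.mul_sum,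
    ← Nat.cast_sum, ← Nat.cast_sum, sum_XX hS m, sum_X hS m, Finset.sum_const,
    Fintype.card_piFinset]
  have hmm : m - 1 = m' + 1 := rfl
  have hmm2 : m - 2 = m' := rfl
  have hcards : (m * m - m : ℕ) = m * m' + m := by
    have h : m * m = m * m' + 2 * m := by rw [hm]; ring
    omega
  rw [hmm, hmm2, hcards]
  simp only [Finset.prod_const, Finset.card_univ, Fintype.card_fin, smul_eq_mul,
    nsmul_eq_mul, ← hNdef]
  push_cast
  simp only [← hNdef, hm]
  push_cast
  ring_nf
  nlinarith [mul_nonneg (pow_nonneg hN0 m') (sq_nonneg N), Nat.cast_nonneg (α := ℝ) m']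

end cheb

lemma bad_card {α : Type*} [DecidableEq α] [Fintype α] {S : Finset α} {σ₀ : α}
    (hS : σ₀ ∈ S) (m' : ℕ) (B : Finset (Fin (m' + 2) → α))
    (hB : B ⊆ Fintype.piFinset (fun _ : Fin (m' + 2) => S))
    (hbad : ∀ f ∈ B, (S.card : ℝ) * ((Finset.univ.filter fun i => f i = σ₀).card : ℝ) <
      ((m' + 2 : ℕ) : ℝ) / 2) :
    (B.card : ℝ) * ((m' + 2 : ℕ) : ℝ) ≤ 4 * (S.card : ℝ) ^ (m' + 3) := by
  classical
  set m : ℝ := ((m' + 2 : ℕ) : ℝ) with hm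
  set N : ℝ := (S.card : ℝ) with hN
  have hmpos : (0 : ℝ) < m := by rw [hm]; positivity
  have hN0 : (0 : ℝ) ≤ N := by rw [hN]; positivity
  have h1 : B.card • ((m / 2) ^ 2) ≤
      ∑ f ∈ B, (N * ((Finset.univ.filter fun i => f i = σ₀).card : ℝ) - m) ^ 2 := by
    refine Finset.card_nsmul_le_sum B _ _ (fun f hf => ?_)
    have hb := hbad f hf
    have hx : (0 : ℝ) ≤ N * ((Finset.univ.filter fun i => f i = σ₀).card : ℝ) :=
      mul_nonneg hN0 (Nat.cast_nonneg _)
    nlinarith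
  have h2 : ∑ f ∈ B, (N * ((Finset.univ.filter fun i => f i = σ₀).card : ℝ) - m) ^ 2 ≤
      ∑ f ∈ Fintype.piFinset (fun _ : Fin (m' + 2) => S),
        (N * ((Finset.univ.filter fun i => f i = σ₀).card : ℝ) - m) ^ 2 :=
    Finset.sum_le_sum_of_subset_of_nonneg hB (fun f _ _ => sq_nonneg _)
  have h3 := cheb_sum hS m'
  rw [nsmul_eq_mul] at h1
  have h4 : (B.card : ℝ) * m * m ≤ 4 * N ^ (m' + 3) * m := by nlinarith
  exact le_of_mul_le_mul_right h4 hmpos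

open Classical in
theorem stmt_18 (g : ℕ) (hg : 3 ≤ g) (d : ℕ) (V₀ : Type) [Fintype V₀] [Nonempty V₀]
    (G₀ : SimpleGraph V₀) [DecidableRel G₀.Adj]
    (hreg : G₀.IsRegularOfDegree d) (hgirth : (g : ℕ∞) ≤ G₀.girth)
    (σ₀ : V₀ → Fin (d + 1)) (hσ₀ : ∀ u w : V₀, G₀.Adj u w → σ₀ u ≠ σ₀ w)
    (hfrozen : ∀ v : V₀, IsFrozen G₀ σ₀ v) :
    ∀ η : ℝ, 0 < η → ∃ m₀ : ℕ, ∀ m : ℕ, m₀ ≤ m →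
      1 - η ≤
        (((Finset.univ.filter (fun σ : Fin m × V₀ → Fin (d + 1) =>
             (∀ a b : Fin m × V₀, (copies G₀ m).Adj a b → σ a ≠ σ b) ∧
               ((m * Fintype.card V₀ : ℝ) /
                   (2 * (d + 1) ^ (Fintype.card V₀)) ≤
                 (Nat.card {v : Fin m × V₀ // IsFrozen (copies G₀ m) σ v} : ℝ)))).card : ℝ) /
          ((Finset.univ.filter (fun σ : Fin m × V₀ → Fin (d + 1) =>
             ∀ a b : Fin m × V₀, (copies G₀ m).Adj a b → σ a ≠ σ b)).card : ℝ)) := by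
  classical
  intro η hη
  set n₀ := Fintype.card V₀ with hn₀
  set S : Finset (V₀ → Fin (d + 1)) :=
    Finset.univ.filter (fun c => ∀ u w : V₀, G₀.Adj u w → c u ≠ c w) with hSdef
  have hσ₀S : σ₀ ∈ S := by simp only [hSdef, Finset.mem_filter, Finset.mem_univ, true_and]; exact hσ₀
  set N := S.card with hNdef
  have hN1 : 1 ≤ N := Finset.card_pos.mpr ⟨σ₀, hσ₀S⟩
  have hNM : (N : ℝ) ≤ ((d + 1 : ℕ) : ℝ) ^ n₀ := by
    have h1 : N ≤ Fintype.card (V₀ → Fin (d + 1)) := by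
      rw [← Finset.card_univ]; exact Finset.card_le_card (Finset.subset_univ _)
    have h2 : Fintype.card (V₀ → Fin (d + 1)) = (d + 1) ^ n₀ := by
      rw [Fintype.card_fun, Fintype.card_fin]
    calc (N : ℝ) ≤ (Fintype.card (V₀ → Fin (d + 1)) : ℝ) := Nat.cast_le.mpr h1
      _ = ((d + 1 : ℕ) : ℝ) ^ n₀ := by rw [h2]; push_cast; ring
  have hn₀pos : 0 < n₀ := Fintype.card_pos
  refine ⟨max 2 (⌈(4 * N : ℝ) / η⌉₊), fun m hm => ?_⟩
  obtain ⟨m', rfl⟩ : ∃ m', m = m' + 2 := by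
    have := le_trans (le_max_left 2 _) hm; exact ⟨m - 2, by omega⟩
  set m := m' + 2 with hmdef
  have hmη : 4 * (N : ℝ) ≤ η * m := by
    have h1 : (⌈(4 * N : ℝ) / η⌉₊ : ℕ) ≤ m := le_trans (le_max_right 2 _) hm
    have h2 : (4 * N : ℝ) / η ≤ m := le_trans (Nat.le_ceil _) (Nat.cast_le.mpr h1)
    calc 4 * (N : ℝ) = (4 * N / η) * η := by field_simp
      _ ≤ m * η := mul_le_mul_of_nonneg_right h2 hη.le
      _ = η * m := mul_comm _ _
  -- the equivalence
  set e : (Fin m × V₀ → Fin (d + 1)) ≃ (Fin m → V₀ → Fin (d + 1)) := Equiv.curry _ _ _ with hedef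
  have he : ∀ σ : Fin m × V₀ → Fin (d + 1), ∀ i u, e σ i u = σ (i, u) := fun _ _ _ => rfl
  have hes : ∀ f : Fin m → V₀ → Fin (d + 1), ∀ a : Fin m × V₀, e.symm f a = f a.1 a.2 :=
    fun _ _ => rfl
  -- properness transfer
  have hproper : ∀ σ : Fin m × V₀ → Fin (d + 1),
      (∀ a b : Fin m × V₀, (copies G₀ m).Adj a b → σ a ≠ σ b) ↔
        e σ ∈ Fintype.piFinset (fun _ : Fin m => S) := by
    intro σ
    rw [Fintype.mem_piFinset]
    constructor
    · intro hp i
      simp only [hSdef, Finset.mem_filter, Finset.mem_univ, true_and]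
      intro u w huw
      exact hp (i, u) (i, w) ⟨rfl, huw⟩
    · intro hp a b hab
      obtain ⟨h1, h2⟩ := hab
      have := hp a.1
      simp only [hSdef, Finset.mem_filter, Finset.mem_univ, true_and] at this
      have h3 := this a.2 b.2 h2
      simp only [he] at h3
      have : σ (a.1, a.2) ≠ σ (a.1, b.2) := h3
      rw [show (a.1, a.2) = a from rfl] at this
      rw [h1] at this
      rw [show (b.1, b.2) = b from rfl] at this
      exact this
  -- frozen count bound
  have hfrozencount : ∀ σ : Fin m × V₀ → Fin (d + 1),
      (Finset.univ.filter fun i : Fin m => e σ i = σ₀).card * n₀ ≤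
        Nat.card {v : Fin m × V₀ // IsFrozen (copies G₀ m) σ v} := by
    intro σ
    rw [Nat.card_eq_fintype_card, Fintype.card_subtype]
    have hsub : (Finset.univ.filter fun i : Fin m => e σ i = σ₀) ×ˢ
        (Finset.univ : Finset V₀) ⊆
        Finset.univ.filter fun v : Fin m × V₀ => IsFrozen (copies G₀ m) σ v := by
      rintro ⟨i, v⟩ hiv
      rw [Finset.mem_product, Finset.mem_filter] at hiv
      obtain ⟨⟨-, hi⟩, -⟩ := hiv
      rw [Finset.mem_filter]
      refine ⟨Finset.mem_univ _, frozen_of_copy_eq hfrozen σ i (fun u => ?_) v⟩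
      exact congrFun hi u
    calc (Finset.univ.filter fun i : Fin m => e σ i = σ₀).card * n₀
        = ((Finset.univ.filter fun i : Fin m => e σ i = σ₀) ×ˢ
            (Finset.univ : Finset V₀)).card := by
          rw [Finset.card_product, Finset.card_univ]
      _ ≤ _ := Finset.card_le_card hsub
  -- sets on the pi side
  set pi : Finset (Fin m → V₀ → Fin (d + 1)) := Fintype.piFinset (fun _ : Fin m => S)
    with hpidef
  have hpicard : pi.card = N ^ m := by
    rw [hpidef, Fintype.card_piFinset]
    simp [hNdef]
  set T : (Fin m → V₀ → Fin (d + 1)) → Prop := fun f =>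
    ((m : ℝ) * n₀) / (2 * ((d + 1 : ℕ) : ℝ) ^ n₀) ≤
      (Nat.card {v : Fin m × V₀ // IsFrozen (copies G₀ m) (e.symm f) v} : ℝ) with hTdef
  set GoodF := pi.filter T with hGdef
  set B := pi.filter (fun f => ¬ T f) with hBdef
  have hsplit : GoodF.card + B.card = N ^ m := by
    rw [hGdef, hBdef, Finset.card_filter_add_card_filter_not, hpicard]
  -- numerator and denominator transfer
  have hden : (Finset.univ.filter (fun σ : Fin m × V₀ → Fin (d + 1) =>
      ∀ a b : Fin m × V₀, (copies G₀ m).Adj a b → σ a ≠ σ b)).card = N ^ m := by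
    rw [← hpicard]
    apply Finset.card_equiv e
    intro σ
    simp only [Finset.mem_filter, Finset.mem_univ, true_and]
    exact hproper σ
  have hnum : (Finset.univ.filter (fun σ : Fin m × V₀ → Fin (d + 1) =>
      (∀ a b : Fin m × V₀, (copies G₀ m).Adj a b → σ a ≠ σ b) ∧
        ((m * Fintype.card V₀ : ℝ) / (2 * (d + 1) ^ (Fintype.card V₀)) ≤
          (Nat.card {v : Fin m × V₀ // IsFrozen (copies G₀ m) σ v} : ℝ)))).card
      = GoodF.card := by
    apply Finset.card_equiv e
    intro σ
    simp only [Finset.mem_filter, Finset.mem_univ, true_and, hGdef]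
    rw [hproper σ]
    constructor
    · rintro ⟨h1, h2⟩
      refine ⟨h1, ?_⟩
      rw [hTdef]
      simp only [Equiv.symm_apply_apply]
      convert h2 using 2
      push_cast
      ring
    · rintro ⟨h1, h2⟩
      refine ⟨h1, ?_⟩
      rw [hTdef] at h2
      simp only [Equiv.symm_apply_apply] at h2
      convert h2 using 2
      push_cast
      ring
  -- bound on the bad set
  have hbadbound : ∀ f ∈ B, (S.card : ℝ) *
      ((Finset.univ.filter fun i => f i = σ₀).card : ℝ) < ((m' + 2 : ℕ) : ℝ) / 2 := by
    intro f hf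
    rw [hBdef, Finset.mem_filter] at hf
    obtain ⟨hfp, hfT⟩ := hf
    simp only [hTdef] at hfT
    push_neg at hfT
    set X := (Finset.univ.filter fun i => f i = σ₀).card with hXdef
    have hXcount : X * n₀ ≤
        Nat.card {v : Fin m × V₀ // IsFrozen (copies G₀ m) (e.symm f) v} := by
      have := hfrozencount (e.symm f)
      rwa [Equiv.apply_symm_apply] at this
    have h1 : ((X : ℝ) * n₀ : ℝ) <
        ((m : ℝ) * n₀) / (2 * ((d + 1 : ℕ) : ℝ) ^ n₀) := by
      calc ((X : ℝ) * n₀ : ℝ) = ((X * n₀ : ℕ) : ℝ) := by push_cast; ring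
        _ ≤ _ := Nat.cast_le.mpr hXcount
        _ < _ := hfT
    have hMpos : (0 : ℝ) < ((d + 1 : ℕ) : ℝ) ^ n₀ := by positivity
    have hn₀R : (0 : ℝ) < (n₀ : ℝ) := by exact_mod_cast hn₀pos
    have h2 : (X : ℝ) < (m : ℝ) / (2 * ((d + 1 : ℕ) : ℝ) ^ n₀) := by
      have := lt_of_mul_lt_mul_right (by
        calc (X : ℝ) * n₀ < ((m : ℝ) * n₀) / (2 * ((d + 1 : ℕ) : ℝ) ^ n₀) := h1
          _ = (m : ℝ) / (2 * ((d + 1 : ℕ) : ℝ) ^ n₀) * n₀ := by ring) hn₀R.le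
      exact this
    have h3 : ((d + 1 : ℕ) : ℝ) ^ n₀ * (X : ℝ) < (m : ℝ) / 2 := by
      have h4 := mul_lt_mul_of_pos_left h2 hMpos
      calc ((d + 1 : ℕ) : ℝ) ^ n₀ * (X : ℝ)
          < ((d + 1 : ℕ) : ℝ) ^ n₀ * ((m : ℝ) / (2 * ((d + 1 : ℕ) : ℝ) ^ n₀)) := h4
        _ = (m : ℝ) / 2 := by field_simp
    have hXnn : (0 : ℝ) ≤ (X : ℝ) := Nat.cast_nonneg _
    calc (S.card : ℝ) * (X : ℝ) ≤ ((d + 1 : ℕ) : ℝ) ^ n₀ * (X : ℝ) := by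
          apply mul_le_mul_of_nonneg_right _ hXnn
          exact_mod_cast hNM
      _ < ((m' + 2 : ℕ) : ℝ) / 2 := h3
  have hBsub : B ⊆ Fintype.piFinset (fun _ : Fin (m' + 2) => S) := by
    rw [hBdef]; exact Finset.filter_subset _ _
  have hBkey := bad_card hσ₀S m' B hBsub hbadbound
  have hNpos : (0 : ℝ) < (N : ℝ) := by exact_mod_cast hN1
  have hNmpos : (0 : ℝ) < (N : ℝ) ^ m := pow_pos hNpos m
  have hmR : (0 : ℝ) < ((m' + 2 : ℕ) : ℝ) := by positivity
  have hcast : ((m : ℕ) : ℝ) = ((m' + 2 : ℕ) : ℝ) := by rw [hmdef]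
  have hexp : (S.card : ℝ) ^ (m' + 3) = (N : ℝ) ^ m * (N : ℝ) := by
    rw [hmdef, ← hNdef]; ring
  have hBle : (B.card : ℝ) ≤ η * (N : ℝ) ^ m := by
    have h1 : (B.card : ℝ) * ((m' + 2 : ℕ) : ℝ) ≤
        (η * (N : ℝ) ^ m) * ((m' + 2 : ℕ) : ℝ) := by
      calc (B.card : ℝ) * ((m' + 2 : ℕ) : ℝ) ≤ 4 * (S.card : ℝ) ^ (m' + 3) := hBkey
        _ = (4 * (N : ℝ)) * (N : ℝ) ^ m := by rw [hexp]; ring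
        _ ≤ (η * ((m' + 2 : ℕ) : ℝ)) * (N : ℝ) ^ m :=
            mul_le_mul_of_nonneg_right (by rw [← hcast]; exact hmη) hNmpos.le
        _ = (η * (N : ℝ) ^ m) * ((m' + 2 : ℕ) : ℝ) := by ring
    exact le_of_mul_le_mul_right h1 hmR
  rw [hnum, hden]
  have hsplitR : (GoodF.card : ℝ) + (B.card : ℝ) = (N : ℝ) ^ m := by
    have h := hsplit
    have h2 : ((GoodF.card + B.card : ℕ) : ℝ) = ((N ^ m : ℕ) : ℝ) := by rw [h]
    push_cast at h2
    linarith
  have hcastNm : ((N ^ m : ℕ) : ℝ) = (N : ℝ) ^ m := by push_cast; ring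
  rw [hcastNm, le_div_iff₀ hNmpos]
  have hring : (1 - η) * (N : ℝ) ^ m = (N : ℝ) ^ m - η * (N : ℝ) ^ m := by ring
  linarith
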